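/- Let (L, φ) be a Lie algebra and r ∈ L ⊗ L with r ∈ Im(1⊗1 − τ). The coboundary map Δ_r(x) = x·r (diagonal adjoint action) defines a Lie cobracket making (L, φ, Δ_r) a Lie bialgebra if and only if x·c(r) = 0 for all x ∈ L, where c(r) = [r¹²,r¹³] + [r¹²,r²³] + [r¹³,r²³]. -/

import Mathlib

open TensorProduct

attribute [local instance 100] LieRing.ofAssociativeRing

section

variable (F : Type*) [Field F] [CharZero F]
variable (L : Type*) [LieRing L] [LieAlgebra F L]

/-- The bracket of `L` as a bilinear map (`x ↦ ad x`). -/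
noncomputable def adL : L →ₗ[F] (L →ₗ[F] L) := (LieAlgebra.ad F L).toLinearMap

/-- Diagonal adjoint action of `L` on `L ⊗ L`, linear in the acting element. -/
noncomputable def actT : L →ₗ[F] ((L ⊗[F] L) →ₗ[F] (L ⊗[F] L)) :=
  (LinearMap.rTensorHom L + LinearMap.lTensorHom L).comp (adL F L)

/-- Diagonal adjoint action of `L` on `L ⊗ L ⊗ L`. -/
noncomputable def actT3 (x : L) :
    (L ⊗[F] (L ⊗[F] L)) →ₗ[F] (L ⊗[F] (L ⊗[F] L)) :=
  LinearMap.rTensor _ (adL F L x) + LinearMap.lTensor _ (actT F L x)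

/-- The twist map `τ(u ⊗ v) = v ⊗ u`. -/
noncomputable def twT : (L ⊗[F] L) →ₗ[F] (L ⊗[F] L) :=
  (TensorProduct.comm F L L).toLinearMap

/-- Cyclic permutation of the coordinates of `L ⊗ L ⊗ L`. -/
noncomputable def cycT : (L ⊗[F] (L ⊗[F] L)) →ₗ[F] (L ⊗[F] (L ⊗[F] L)) :=
  (TensorProduct.comm F (L ⊗[F] L) L).toLinearMap.comp
    (TensorProduct.assoc F L L L).symm.toLinearMap

/-- The bracket as a linear map `L ⊗ L → L`. -/
noncomputable def BkT : (L ⊗[F] L) →ₗ[F] L := TensorProduct.lift (adL F L)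

/-- `(a⊗b)⊗(a'⊗b') ↦ [a,a']⊗b⊗b'`, giving `[r¹²,r¹³]`. -/
noncomputable def cT1213 :
    ((L ⊗[F] L) ⊗[F] (L ⊗[F] L)) →ₗ[F] (L ⊗[F] (L ⊗[F] L)) :=
  (TensorProduct.map (BkT F L) LinearMap.id).comp
    (TensorProduct.tensorTensorTensorComm F L L L L).toLinearMap

/-- `(a⊗b)⊗(a'⊗b') ↦ a⊗[b,a']⊗b'`, giving `[r¹²,r²³]`. -/
noncomputable def cT1223 :
    ((L ⊗[F] L) ⊗[F] (L ⊗[F] L)) →ₗ[F] (L ⊗[F] (L ⊗[F] L)) :=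
  (LinearMap.lTensor L
      ((TensorProduct.map (BkT F L) LinearMap.id).comp
        (TensorProduct.assoc F L L L).symm.toLinearMap)).comp
    (TensorProduct.assoc F L L (L ⊗[F] L)).toLinearMap

/-- `(a⊗b)⊗(a'⊗b') ↦ a⊗a'⊗[b,b']`, giving `[r¹³,r²³]`. -/
noncomputable def cT1323 :
    ((L ⊗[F] L) ⊗[F] (L ⊗[F] L)) →ₗ[F] (L ⊗[F] (L ⊗[F] L)) :=
  ((TensorProduct.assoc F L L L).toLinearMap.comp
    (TensorProduct.map LinearMap.id (BkT F L))).comp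
    (TensorProduct.tensorTensorTensorComm F L L L L).toLinearMap

/-- `c(r) = [r¹²,r¹³] + [r¹²,r²³] + [r¹³,r²³]` (lying in `L ⊗ L ⊗ L`). -/
noncomputable def cYBT (r : L ⊗[F] L) : L ⊗[F] (L ⊗[F] L) :=
  cT1213 F L (r ⊗ₜ[F] r) + cT1223 F L (r ⊗ₜ[F] r) + cT1323 F L (r ⊗ₜ[F] r)

/-- The coboundary `Δ_r(x) = x·r` as a linear map. -/
noncomputable def Δr (r : L ⊗[F] L) : L →ₗ[F] (L ⊗[F] L) :=
  (actT F L).flip r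


section AuxProofs
set_option linter.unusedSectionVars false
set_option maxHeartbeats 2000000
set_option maxRecDepth 40000

variable (F : Type*) [Field F] [CharZero F]
variable (L : Type*) [LieRing L] [LieAlgebra F L]

lemma actT_tmul (x a b : L) : actT F L x (a ⊗ₜ[F] b) = ⁅x,a⁆ ⊗ₜ[F] b + a ⊗ₜ[F] ⁅x,b⁆ := by
  simp [actT, adL, LieAlgebra.ad_apply]
lemma twT_tmul (a b : L) : twT F L (a ⊗ₜ[F] b) = b ⊗ₜ[F] a := rfl
lemma cycT_tmul (a b c : L) : cycT F L (a ⊗ₜ[F] (b ⊗ₜ[F] c)) = c ⊗ₜ[F] (a ⊗ₜ[F] b) := rfl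
lemma BkT_tmul (a b : L) : BkT F L (a ⊗ₜ[F] b) = ⁅a,b⁆ := by
  simp [BkT, adL, LieAlgebra.ad_apply]
lemma cT1213_tmul (a b c d : L) :
    cT1213 F L ((a ⊗ₜ[F] b) ⊗ₜ[F] (c ⊗ₜ[F] d)) = ⁅a,c⁆ ⊗ₜ[F] (b ⊗ₜ[F] d) := by
  simp [cT1213, BkT_tmul, TensorProduct.tensorTensorTensorComm_tmul]
lemma cT1223_tmul (a b c d : L) :
    cT1223 F L ((a ⊗ₜ[F] b) ⊗ₜ[F] (c ⊗ₜ[F] d)) = a ⊗ₜ[F] (⁅b,c⁆ ⊗ₜ[F] d) := by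
  simp [cT1223, BkT_tmul]
lemma cT1323_tmul (a b c d : L) :
    cT1323 F L ((a ⊗ₜ[F] b) ⊗ₜ[F] (c ⊗ₜ[F] d)) = a ⊗ₜ[F] (c ⊗ₜ[F] ⁅b,d⁆) := by
  simp [cT1323, BkT_tmul, TensorProduct.tensorTensorTensorComm_tmul]
lemma actT3_tmul (x a b c : L) :
    actT3 F L x (a ⊗ₜ[F] (b ⊗ₜ[F] c))
      = ⁅x,a⁆ ⊗ₜ[F] (b ⊗ₜ[F] c) + a ⊗ₜ[F] (⁅x,b⁆ ⊗ₜ[F] c) + a ⊗ₜ[F] (b ⊗ₜ[F] ⁅x,c⁆) := by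
  simp [actT3, adL, LieAlgebra.ad_apply, actT_tmul, tmul_add, add_assoc]
lemma Δr_apply (r : L ⊗[F] L) (x : L) : Δr F L r x = actT F L x r := rfl

lemma twT_actT (x : L) (m : L ⊗[F] L) : twT F L (actT F L x m) = actT F L x (twT F L m) := by
  induction m using TensorProduct.induction_on with
  | zero => simp
  | tmul a b => simp [actT_tmul, twT_tmul]; abel
  | add p q hp hq => simp [map_add, hp, hq]

lemma actT_lie (x y : L) (m : L ⊗[F] L) :
    actT F L ⁅x,y⁆ m = actT F L x (actT F L y m) - actT F L y (actT F L x m) := by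
  induction m using TensorProduct.induction_on with
  | zero => simp
  | tmul a b =>
      simp [actT_tmul, lie_lie, map_add, sub_tmul, tmul_sub]
      abel
  | add p q hp hq => simp [map_add, hp, hq]; abel

/-- `Λ + σΛ + σ²Λ` for `Λ = (1 ⊗ Δ_t)(Δ_s x)`, bilinear in `(s, t)`. -/
noncomputable def Lam3 (s t : L ⊗[F] L) (x : L) : L ⊗[F] (L ⊗[F] L) :=
  (LinearMap.lTensor L (Δr F L t)) (Δr F L s x)
    + cycT F L ((LinearMap.lTensor L (Δr F L t)) (Δr F L s x))
    + cycT F L (cycT F L ((LinearMap.lTensor L (Δr F L t)) (Δr F L s x)))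

/-- The bilinear version of `c(r)`. -/
noncomputable def Cb (s t : L ⊗[F] L) : L ⊗[F] (L ⊗[F] L) :=
  cT1213 F L (s ⊗ₜ[F] t) + cT1223 F L (s ⊗ₜ[F] t) + cT1323 F L (s ⊗ₜ[F] t)

lemma jac3 (x q r : L) : ⁅r,⁅x,q⁆⁆ = ⁅q,⁅x,r⁆⁆ - ⁅x,⁅q,r⁆⁆ := by
  rw [← lie_skew, lie_lie]; abel

lemma keyPure (a b c d x : L) :
    Lam3 F L (a ⊗ₜ[F] b - b ⊗ₜ[F] a) (c ⊗ₜ[F] d - d ⊗ₜ[F] c) x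
      + Lam3 F L (c ⊗ₜ[F] d - d ⊗ₜ[F] c) (a ⊗ₜ[F] b - b ⊗ₜ[F] a) x
    = actT3 F L x (Cb F L (a ⊗ₜ[F] b - b ⊗ₜ[F] a) (c ⊗ₜ[F] d - d ⊗ₜ[F] c)
        + Cb F L (c ⊗ₜ[F] d - d ⊗ₜ[F] c) (a ⊗ₜ[F] b - b ⊗ₜ[F] a)) := by
  simp only [Lam3, Cb, map_sub, map_add, Δr_apply, actT_tmul, LinearMap.lTensor_tmul,
    cycT_tmul, cT1213_tmul, cT1223_tmul, cT1323_tmul, actT3_tmul,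
    sub_tmul, tmul_sub, add_tmul, tmul_add, lie_lie, neg_tmul, tmul_neg, lie_neg, neg_lie,
    neg_neg]
  simp only [← lie_skew c a, ← lie_skew d a, ← lie_skew c b, ← lie_skew d b,
    jac3 L x a c, jac3 L x b c, jac3 L x a d, jac3 L x b d,
    lie_neg, neg_lie, neg_tmul, tmul_neg, neg_neg, tmul_sub, sub_tmul]
  abel

lemma Δr_add (s s' : L ⊗[F] L) : Δr F L (s + s') = Δr F L s + Δr F L s' :=
  map_add _ _ _

lemma Lam3_add_left (s s' t : L ⊗[F] L) (x : L) :
    Lam3 F L (s + s') t x = Lam3 F L s t x + Lam3 F L s' t x := by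
  simp only [Lam3, Δr_add, LinearMap.add_apply, map_add]; abel

lemma Lam3_add_right (s t t' : L ⊗[F] L) (x : L) :
    Lam3 F L s (t + t') x = Lam3 F L s t x + Lam3 F L s t' x := by
  simp only [Lam3, Δr_add, LinearMap.lTensor_add, LinearMap.add_apply, map_add]; abel

lemma Lam3_zero_left (t : L ⊗[F] L) (x : L) : Lam3 F L 0 t x = 0 := by
  simp [Lam3, Δr]

lemma Lam3_zero_right (s : L ⊗[F] L) (x : L) : Lam3 F L s 0 x = 0 := by
  simp [Lam3, Δr]

lemma Cb_add_left (s s' t : L ⊗[F] L) :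
    Cb F L (s + s') t = Cb F L s t + Cb F L s' t := by
  simp only [Cb, add_tmul, map_add]; abel

lemma Cb_add_right (s t t' : L ⊗[F] L) :
    Cb F L s (t + t') = Cb F L s t + Cb F L s t' := by
  simp only [Cb, tmul_add, map_add]; abel

lemma Cb_zero_left (t : L ⊗[F] L) : Cb F L 0 t = 0 := by simp [Cb]
lemma Cb_zero_right (s : L ⊗[F] L) : Cb F L s 0 = 0 := by simp [Cb]

lemma keyP (u v : L ⊗[F] L) (x : L) :
    Lam3 F L (u - twT F L u) (v - twT F L v) x
      + Lam3 F L (v - twT F L v) (u - twT F L u) x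
    = actT3 F L x (Cb F L (u - twT F L u) (v - twT F L v)
        + Cb F L (v - twT F L v) (u - twT F L u)) := by
  induction u using TensorProduct.induction_on with
  | zero => simp [Lam3_zero_left, Lam3_zero_right, Cb_zero_left, Cb_zero_right]
  | tmul a b =>
      induction v using TensorProduct.induction_on with
      | zero => simp [Lam3_zero_left, Lam3_zero_right, Cb_zero_left, Cb_zero_right]
      | tmul c d =>
          have := keyPure F L a b c d x
          simpa [twT_tmul] using this
      | add v₁ v₂ h1 h2 =>
          have hv : v₁ + v₂ - twT F L (v₁ + v₂)
              = (v₁ - twT F L v₁) + (v₂ - twT F L v₂) := by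
            rw [map_add]; abel
          rw [hv]
          have h := congrArg₂ (· + ·) h1 h2
          simp only [Lam3_add_left, Lam3_add_right, Cb_add_left, Cb_add_right,
            map_add] at h ⊢
          abel_nf at h ⊢
          exact h
  | add u₁ u₂ h1 h2 =>
      have hu : u₁ + u₂ - twT F L (u₁ + u₂)
          = (u₁ - twT F L u₁) + (u₂ - twT F L u₂) := by
        rw [map_add]; abel
      rw [hu]
      have h := congrArg₂ (· + ·) h1 h2
      simp only [Lam3_add_left, Lam3_add_right, Cb_add_left, Cb_add_right,
        map_add] at h ⊢
      abel_nf at h ⊢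
      exact h

lemma mainId (r : L ⊗[F] L) (hr : ∃ u, r = u - twT F L u) (x : L) :
    Lam3 F L r r x = actT3 F L x (cYBT F L r) := by
  obtain ⟨u, rfl⟩ := hr
  have h := keyP F L u u x
  have h2 : (2:F) • Lam3 F L (u - twT F L u) (u - twT F L u) x
      = (2:F) • actT3 F L x (cYBT F L (u - twT F L u)) := by
    rw [two_smul, two_smul]
    have : cYBT F L (u - twT F L u) = Cb F L (u - twT F L u) (u - twT F L u) := rfl
    rw [this]
    simpa [map_add] using h
  exact smul_right_injective _ (two_ne_zero) h2

end AuxProofs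

/-- Drinfeld: for antisymmetric `r ∈ Im(1⊗1 − τ)`, the coboundary
`Δ_r(x) = x·r` makes `(L, φ, Δ_r)` a Lie bialgebra iff `x·c(r) = 0` for all `x ∈ L`
(the modified Yang–Baxter equation). -/
theorem coboundary_bialgebra_iff_MYBE (r : L ⊗[F] L)
    (hr : ∃ u, r = u - twT F L u) :
    ((∀ x, ∃ u, Δr F L r x = u - twT F L u) ∧
      (∀ x, (LinearMap.lTensor L (Δr F L r)) (Δr F L r x)
          + cycT F L ((LinearMap.lTensor L (Δr F L r)) (Δr F L r x))
          + cycT F L (cycT F L ((LinearMap.lTensor L (Δr F L r)) (Δr F L r x))) = 0) ∧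
      (∀ x y, Δr F L r ⁅x, y⁆ = actT F L x (Δr F L r y) - actT F L y (Δr F L r x)))
    ↔ (∀ x : L, actT3 F L x (cYBT F L r) = 0) := by
  constructor
  · rintro ⟨-, h2, -⟩ x
    rw [← mainId F L r hr x]
    exact h2 x
  · intro h
    refine ⟨?_, ?_, ?_⟩
    · intro x
      obtain ⟨u, rfl⟩ := hr
      exact ⟨actT F L x u, by rw [Δr_apply, map_sub, ← twT_actT]⟩
    · intro x
      exact (mainId F L r hr x).trans (h x)
    · intro x y
      simp only [Δr_apply]
      exact actT_lie F L x y r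

end
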